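/- Let f : ℝⁿ → ℝ be differentiable with gradient g = ∇f, let μ > 0, fix x ∈ ℝⁿ and a symmetric positive definite n×n matrix H. Define ℓ(y) = f(x) + g(x)ᵀ(y − x) + μ‖y‖₁ and q(y) = ℓ(y) + ½(y − x)ᵀH(y − x). If ȳ is a minimizer of q over ℝⁿ, then ℓ(x) ≥ ℓ(ȳ) + (ȳ − x)ᵀH(ȳ − x). -/

import Mathlib

open scoped RealInnerProductSpace

variable {n : ℕ}
local notation "E" => EuclideanSpace ℝ (Fin n)
local notation "CLM" => Matrix.toEuclideanCLM (𝕜 := ℝ)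

/-- if `ȳ` minimizes `q`, then `ℓ(x) ≥ ℓ(ȳ) + (ȳ-x)ᵀH(ȳ-x)`. -/
theorem stmt_15
    (f : E → ℝ) (g : E → E)
    (hg : ∀ y, HasGradientAt f (g y) y)
    (μ : ℝ) (hμ : 0 < μ)
    (x : E)
    (H : Matrix (Fin n) (Fin n) ℝ) (hpd : H.PosDef)
    (ℓ q : E → ℝ)
    (hℓ : ∀ y, ℓ y = f x + ⟪g x, y - x⟫ + μ * ∑ i, |y i|)
    (hq : ∀ y, q y = ℓ y + (1 / 2) * ⟪y - x, CLM H (y - x)⟫)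
    (ybar : E) (hmin : ∀ z, q ybar ≤ q z) :
    ℓ x ≥ ℓ ybar + ⟪ybar - x, CLM H (ybar - x)⟫ := by
  set b := ⟪ybar - x, CLM H (ybar - x)⟫ with hb
  have hbkey : ∀ t : ℝ, t ∈ Set.Ioc (0:ℝ) 1 →
      ℓ ybar - ℓ x + b ≤ t * (b / 2) := by
    intro t ht
    obtain ⟨ht0, ht1⟩ := ht
    set z := x + (1 - t) • (ybar - x) with hz
    have hzx : z - x = (1 - t) • (ybar - x) := by simp [hz]
    have hquad : ⟪z - x, CLM H (z - x)⟫ = (1 - t) * ((1 - t) * b) := by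
      rw [hzx, real_inner_smul_left, map_smul, real_inner_smul_right]
    have h1 : ⟪g x, z - x⟫ = (1 - t) * ⟪g x, ybar - x⟫ := by
      rw [hzx, real_inner_smul_right]
    have h3 : ⟪g x, x - x⟫ = (0 : ℝ) := by simp
    have h2 : ∑ i, |z i| ≤ (1 - t) * ∑ i, |ybar i| + t * ∑ i, |x i| := by
      rw [Finset.mul_sum, Finset.mul_sum, ← Finset.sum_add_distrib]
      apply Finset.sum_le_sum
      intro i _
      have hzi : z i = (1 - t) * ybar i + t * x i := by
        simp only [hz, PiLp.add_apply, PiLp.smul_apply, PiLp.sub_apply, smul_eq_mul]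
        ring
      rw [hzi]
      calc |(1 - t) * ybar i + t * x i| ≤ |(1 - t) * ybar i| + |t * x i| := abs_add_le _ _
        _ = (1 - t) * |ybar i| + t * |x i| := by
            rw [abs_mul, abs_mul, abs_of_nonneg (by linarith), abs_of_nonneg ht0.le]
    have hℓz : ℓ z ≤ (1 - t) * ℓ ybar + t * ℓ x := by
      rw [hℓ z, hℓ ybar, hℓ x, h1, h3]
      nlinarith [mul_le_mul_of_nonneg_left h2 hμ.le]
    have hm := hmin z
    rw [hq z, hq ybar, hquad] at hm
    have h4 : t * (ℓ ybar - ℓ x + b - t * (b / 2)) ≤ t * 0 := by nlinarith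
    have h5 := (mul_le_mul_iff_right₀ ht0).mp h4
    linarith
  have htend : Filter.Tendsto (fun t : ℝ => t * (b / 2)) (nhdsWithin 0 (Set.Ioi 0)) (nhds 0) := by
    have : Filter.Tendsto (fun t : ℝ => t * (b / 2)) (nhds 0) (nhds (0 * (b / 2))) :=
      (Filter.tendsto_id.mul_const _)
    simpa using this.mono_left nhdsWithin_le_nhds
  have key : ℓ ybar - ℓ x + b ≤ 0 := by
    refine ge_of_tendsto htend ?_
    filter_upwards [Ioc_mem_nhdsGT_of_mem (by constructor <;> norm_num : (0:ℝ) ∈ Set.Ico (0:ℝ) 1)] with t ht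
    exact hbkey t ht
  linarith
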